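/- Eigenvalue-tail bound relating H_max and H_{−∞}: let σ be a positive semidefinite n×n matrix with tr σ ≤ 1 and spectral decomposition σ = Σ_i r_i |i⟩⟨i| with r_1 ≥ r_2 ≥ … ≥ r_n. Fix ε > 0, let j be the smallest index with Σ_{i ≥ j} r_i ≤ ε, and set Π := Σ_{i < j} |i⟩⟨i|. Then tr((1 − Π)σ) ≤ ε and tr√σ > ε · (λ_min⁺(ΠσΠ))^{−1/2}, where λ_min⁺ denotes the smallest nonzero eigenvalue (assuming ΠσΠ ≠ 0). In entropy form: H_max(σ) > H_{−∞}(ΠσΠ) − 2 log₂(1/ε). -/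

import Mathlib

open Matrix Finset
open scoped ComplexOrder Classical

noncomputable section

/-- PSD square root (junk value 0 if not PSD). -/
def psdSqrt {n : Type*} [Fintype n] [DecidableEq n] (A : Matrix n n ℂ) : Matrix n n ℂ :=
  if h : A.PosSemidef then
    (h.1.eigenvectorUnitary : Matrix n n ℂ) * diagonal ((↑) ∘ (√·) ∘ h.1.eigenvalues) *
      (star h.1.eigenvectorUnitary : Matrix n n ℂ) else 0

/-- `tr √A` for a positive semidefinite `A`. -/
def trSqrt {n : Type*} [Fintype n] [DecidableEq n] (A : Matrix n n ℂ) : ℝ :=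
  ((psdSqrt A).trace).re

/-- smallest nonzero eigenvalue of a Hermitian matrix (junk value 0 otherwise). -/
def lamMinPos {n : Type*} [Fintype n] [DecidableEq n] (A : Matrix n n ℂ) : ℝ :=
  if h : A.IsHermitian then sInf {x : ℝ | (∃ i, h.eigenvalues i = x) ∧ x ≠ 0} else 0

lemma myOuterMul {n : Type*} [Fintype n] (a b c d : n → ℂ) :
    vecMulVec a b * vecMulVec c d = (b ⬝ᵥ c) • vecMulVec a d := by
  ext i j
  simp only [Matrix.mul_apply, vecMulVec_apply, Matrix.smul_apply, dotProduct, smul_eq_mul,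
    Finset.sum_mul]
  exact Finset.sum_congr rfl fun k _ => by ring

lemma myTraceOuter {n : Type*} [Fintype n] (a b : n → ℂ) :
    (vecMulVec a b).trace = a ⬝ᵥ b := by
  simp [Matrix.trace, Matrix.diag, vecMulVec_apply, dotProduct]

lemma myOuterMulVec {n : Type*} [Fintype n] (a b v : n → ℂ) :
    vecMulVec a b *ᵥ v = (b ⬝ᵥ v) • a := by
  ext i
  simp only [mulVec, vecMulVec_apply, dotProduct, Pi.smul_apply, smul_eq_mul, Finset.sum_mul]
  exact Finset.sum_congr rfl fun k _ => by ring

lemma mySumMulVec {n : Type*} [Fintype n] {m : Type*} (s : Finset m)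
    (A : m → Matrix n n ℂ) (v : n → ℂ) :
    (∑ i ∈ s, A i) *ᵥ v = ∑ i ∈ s, A i *ᵥ v := by
  ext k
  simp only [mulVec, dotProduct, Finset.sum_apply, Matrix.sum_apply, Finset.sum_mul]
  rw [Finset.sum_comm]

lemma myDotSum {n : Type*} [Fintype n] {m : Type*} (s : Finset m)
    (v : n → ℂ) (w : m → n → ℂ) :
    v ⬝ᵥ (∑ i ∈ s, w i) = ∑ i ∈ s, v ⬝ᵥ w i := by
  simp only [dotProduct, Finset.sum_apply, Finset.mul_sum]
  rw [Finset.sum_comm]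

lemma myOuterCT {n : Type*} [Fintype n] (a b : n → ℂ) :
    (vecMulVec a b)ᴴ = vecMulVec (star b) (star a) := by
  ext i j
  simp [conjTranspose_apply, vecMulVec_apply, mul_comm]

open scoped MatrixOrder in
lemma myPsdSqrt_eq {n : Type*} [Fintype n] [DecidableEq n] (A B : Matrix n n ℂ)
    (hA : A.PosSemidef) (hB : B.PosSemidef) (h : B * B = A) : psdSqrt A = B := by
  unfold psdSqrt
  rw [dif_pos hA]
  have h1 := hA.1.cfc_eq Real.sqrt
  rw [Matrix.IsHermitian.cfc, Unitary.conjStarAlgAut_apply] at h1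
  refine Eq.trans h1.symm ?_
  rw [← cfcₙ_eq_cfc, ← CFC.sqrt_eq_real_sqrt A (Matrix.nonneg_iff_posSemidef.mpr hA)]
  exact CFC.sqrt_unique h (Matrix.nonneg_iff_posSemidef.mpr hB)

/-- Eigenvalue-tail bound relating `H_max` and `H_{−∞}`: with `σ = Σ_i r_i |u_i⟩⟨u_i|`,
eigenvalues non-increasing, `j` the smallest index whose tail sum is `≤ ε`, and
`P = Σ_{i<j} |u_i⟩⟨u_i|`, one has `tr((1−P)σ) ≤ ε` and
`tr √σ > ε · λ_min⁺(PσP)^{−1/2}`; in entropy form,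
`H_max(σ) > H_{−∞}(PσP) − 2 log₂(1/ε)`. -/
theorem Hmax_tail_bound {n : ℕ}
    (σ : Matrix (Fin n) (Fin n) ℂ) (hσ : σ.PosSemidef) (htr : σ.trace.re ≤ 1)
    (r : Fin n → ℝ) (u : Fin n → Fin n → ℂ)
    (hu : ∀ i i', star (u i) ⬝ᵥ u i' = if i = i' then 1 else 0)
    (hdec : σ = ∑ i, ((r i : ℝ) : ℂ) • vecMulVec (u i) (star (u i)))
    (hmono : Antitone r) (hrnn : ∀ i, 0 ≤ r i)
    (ε : ℝ) (hε : 0 < ε) (j : Fin n)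
    (hj : ∑ i ∈ univ.filter (fun i => j ≤ i), r i ≤ ε)
    (hjmin : ∀ j' : Fin n, j' < j → ε < ∑ i ∈ univ.filter (fun i => j' ≤ i), r i)
    (P : Matrix (Fin n) (Fin n) ℂ)
    (hP : P = ∑ i ∈ univ.filter (fun i => i < j), vecMulVec (u i) (star (u i)))
    (hne : P * σ * P ≠ 0) :
    ((((1 : Matrix (Fin n) (Fin n) ℂ) - P) * σ).trace).re ≤ ε ∧
    ε / Real.sqrt (lamMinPos (P * σ * P)) < trSqrt σ ∧
    2 * Real.logb 2 (trSqrt σ) >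
      (- Real.logb 2 (lamMinPos (P * σ * P))) - 2 * Real.logb 2 (1 / ε) := by
  set F : Finset (Fin n) := univ.filter (fun i => i < j) with hF
  -- P * σ collapse
  have hPσ : P * σ = ∑ i ∈ F, ((r i : ℝ) : ℂ) • vecMulVec (u i) (star (u i)) := by
    rw [hP, hdec, Finset.sum_mul]
    refine Finset.sum_congr rfl fun i hi => ?_
    rw [Finset.mul_sum]
    have key : ∀ m, vecMulVec (u i) (star (u i)) * (((r m : ℝ) : ℂ) • vecMulVec (u m) (star (u m)))
        = if i = m then ((r m : ℝ) : ℂ) • vecMulVec (u i) (star (u m)) else 0 := by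
      intro m
      rw [Matrix.mul_smul, myOuterMul, hu]
      split_ifs with h
      · simp [smul_smul]
      · simp
    simp only [key]
    simp
  -- trace facts
  have htrO : ∀ i : Fin n, (vecMulVec (u i) (star (u i))).trace = 1 := by
    intro i
    rw [myTraceOuter, dotProduct_comm]
    simpa using hu i i
  have htrσ : σ.trace = ∑ i, ((r i : ℝ) : ℂ) := by
    rw [hdec, trace_sum]
    simp [trace_smul, htrO]
  have htrPσ : (P * σ).trace = ∑ i ∈ F, ((r i : ℝ) : ℂ) := by
    rw [hPσ, trace_sum]
    simp [trace_smul, htrO]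
  -- Part 1
  have part1 : ((((1 : Matrix (Fin n) (Fin n) ℂ) - P) * σ).trace).re
      = ∑ i ∈ univ.filter (fun i => j ≤ i), r i := by
    rw [Matrix.sub_mul, Matrix.one_mul, trace_sub, htrσ, htrPσ]
    have hsplit : (∑ i, ((r i : ℝ) : ℂ)) = (∑ i ∈ F, ((r i : ℝ) : ℂ))
        + ∑ i ∈ univ.filter (fun i => j ≤ i), ((r i : ℝ) : ℂ) := by
      rw [hF, ← Finset.sum_filter_add_sum_filter_not univ (fun i => i < j)]
      congr 1
      apply Finset.sum_congr _ (fun _ _ => rfl)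
      ext i
      simp [not_lt]
    rw [hsplit]
    push_cast
    simp
  -- positivity of r i for i < j
  have hpos : ∀ i : Fin n, i < j → 0 < r i := by
    intro i hij
    rcases (hrnn i).lt_or_eq with h | h
    · exact h
    · exfalso
      have hz : ∑ m ∈ univ.filter (fun m => i ≤ m), r m = 0 := by
        refine Finset.sum_eq_zero fun m hm => ?_
        simp only [Finset.mem_filter] at hm
        have h1 : r m ≤ r i := hmono hm.2
        have h2 := hrnn m
        linarith
      have := hjmin i hij
      rw [hz] at this
      linarith
  -- F nonempty, define k
  have hFne : F.Nonempty := by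
    by_contra h
    rw [Finset.not_nonempty_iff_eq_empty] at h
    apply hne
    rw [hP, h, Finset.sum_empty, Matrix.zero_mul, Matrix.mul_zero]
  have hj1 : 1 ≤ (j : ℕ) := by
    obtain ⟨i, hi⟩ := hFne
    rw [hF, Finset.mem_filter] at hi
    have h2 : (i : ℕ) < (j : ℕ) := hi.2
    omega
  have hkn : (j : ℕ) - 1 < n := by omega
  set k : Fin n := ⟨(j : ℕ) - 1, hkn⟩ with hk
  have hklt : k < j := by
    rw [Fin.lt_def]; simp [hk]; omega
  have hkle : ∀ i : Fin n, i < j → i ≤ k := by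
    intro i hi
    rw [Fin.le_def]
    rw [Fin.lt_def] at hi
    simp [hk]; omega
  have hrkpos : 0 < r k := hpos k hklt
  -- P σ P collapse
  have hTeq : P * σ * P = ∑ i ∈ F, ((r i : ℝ) : ℂ) • vecMulVec (u i) (star (u i)) := by
    rw [hPσ, hP, Finset.sum_mul]
    refine Finset.sum_congr rfl fun i hi => ?_
    rw [Matrix.smul_mul, Finset.mul_sum]
    have key : ∀ m, vecMulVec (u i) (star (u i)) * vecMulVec (u m) (star (u m))
        = if i = m then vecMulVec (u i) (star (u m)) else 0 := by
      intro m
      rw [myOuterMul, hu]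
      split_ifs with h <;> simp
    simp only [key]
    rw [Finset.sum_ite_eq F i (fun m => vecMulVec (u i) (star (u m)))]
    simp [hi]
  -- Hermitian-ness
  have hPH : Pᴴ = P := by
    rw [hP, conjTranspose_sum]
    exact Finset.sum_congr rfl fun i _ => by rw [myOuterCT, star_star]
  have hTH : (P * σ * P).IsHermitian := by
    unfold Matrix.IsHermitian
    rw [conjTranspose_mul, conjTranspose_mul, hσ.1, hPH, mul_assoc]
  -- every nonzero eigenvalue of PσP is ≥ r k
  have heig : ∀ x : ℝ, (∃ i0, hTH.eigenvalues i0 = x) → x ≠ 0 → r k ≤ x := by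
    rintro x ⟨i0, hx⟩ hx0
    set v : Fin n → ℂ := ⇑(hTH.eigenvectorBasis i0) with hv
    have hvne : v ≠ 0 := by
      intro h0
      have hnorm := hTH.eigenvectorBasis.orthonormal.1 i0
      have : hTH.eigenvectorBasis i0 = 0 := by
        apply (WithLp.equiv 2 (Fin n → ℂ)).injective
        ext i
        have := congrFun h0 i
        simpa [hv] using this
      rw [this] at hnorm
      simp at hnorm
    have hvec : (P * σ * P) *ᵥ v = x • v := by
      rw [← hx]; exact hTH.mulVec_eigenvectorBasis i0
    have hexp : x • v = ∑ m ∈ F, (((r m : ℝ) : ℂ) * (star (u m) ⬝ᵥ v)) • u m := by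
      rw [← hvec, hTeq, mySumMulVec]
      refine Finset.sum_congr rfl fun m hm => ?_
      rw [Matrix.smul_mulVec, myOuterMulVec, smul_smul]
    have hdot : ∀ m0 ∈ F, ((x : ℂ) - ((r m0 : ℝ) : ℂ)) * (star (u m0) ⬝ᵥ v) = 0 := by
      intro m0 hm0
      have h1 : star (u m0) ⬝ᵥ (x • v) = (x : ℂ) * (star (u m0) ⬝ᵥ v) := by
        simp [dotProduct_smul, Complex.real_smul]
      have h2 : star (u m0) ⬝ᵥ (∑ m ∈ F, (((r m : ℝ) : ℂ) * (star (u m) ⬝ᵥ v)) • u m)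
          = ((r m0 : ℝ) : ℂ) * (star (u m0) ⬝ᵥ v) := by
        rw [myDotSum]
        have : ∀ m ∈ F, star (u m0) ⬝ᵥ ((((r m : ℝ) : ℂ) * (star (u m) ⬝ᵥ v)) • u m)
            = if m0 = m then ((r m : ℝ) : ℂ) * (star (u m) ⬝ᵥ v) else 0 := by
          intro m _
          rw [dotProduct_smul, hu]
          split_ifs <;> simp [smul_eq_mul]
        rw [Finset.sum_congr rfl this, Finset.sum_ite_eq F m0]
        simp [hm0]
      have hmain : (x : ℂ) * (star (u m0) ⬝ᵥ v) = ((r m0 : ℝ) : ℂ) * (star (u m0) ⬝ᵥ v) := by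
        calc (x : ℂ) * (star (u m0) ⬝ᵥ v) = star (u m0) ⬝ᵥ (x • v) := h1.symm
          _ = _ := by rw [hexp, h2]
      linear_combination hmain
    -- if x avoids all r m then all coefficients vanish
    by_contra hcon
    push_neg at hcon
    have hxnot : ∀ m ∈ F, x ≠ r m := by
      intro m hm hxm
      rw [hF, Finset.mem_filter] at hm
      have : r k ≤ r m := hmono (hkle m hm.2)
      rw [← hxm] at this
      exact absurd this (not_le.mpr hcon)
    have hcz : ∀ m ∈ F, star (u m) ⬝ᵥ v = 0 := by
      intro m hm
      have := hdot m hm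
      rcases mul_eq_zero.mp this with h | h
      · exfalso
        apply hxnot m hm
        have : (x : ℂ) = ((r m : ℝ) : ℂ) := by linear_combination h
        exact_mod_cast this
      · exact h
    have : x • v = 0 := by
      rw [hexp]
      refine Finset.sum_eq_zero fun m hm => ?_
      rw [hcz m hm]
      simp
    rcases smul_eq_zero.mp this with h | h
    · exact hx0 h
    · exact hvne h
  -- existence of a nonzero eigenvalue
  have hex : ∃ i0, hTH.eigenvalues i0 ≠ 0 := by
    by_contra h
    push_neg at h
    apply hne
    have hdz : diagonal (RCLike.ofReal ∘ hTH.eigenvalues) = (0 : Matrix (Fin n) (Fin n) ℂ) := by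
      ext i m
      simp [Matrix.diagonal, h]
    calc P * σ * P = _ := hTH.spectral_theorem
      _ = 0 := by rw [hdz]; simp
  -- lower bound on lamMinPos
  have hlam : r k ≤ lamMinPos (P * σ * P) := by
    unfold lamMinPos
    rw [dif_pos hTH]
    apply le_csInf
    · obtain ⟨i0, hi0⟩ := hex
      exact ⟨hTH.eigenvalues i0, ⟨i0, rfl⟩, hi0⟩
    · rintro x ⟨⟨i0, rfl⟩, hx0⟩
      exact heig _ ⟨i0, rfl⟩ hx0
  have hlampos : 0 < lamMinPos (P * σ * P) := lt_of_lt_of_le hrkpos hlam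
  -- square root of σ
  set S0 : Matrix (Fin n) (Fin n) ℂ :=
    ∑ i, ((Real.sqrt (r i) : ℝ) : ℂ) • vecMulVec (u i) (star (u i)) with hS0
  have hS0sq : S0 * S0 = σ := by
    rw [hS0, Finset.sum_mul, hdec]
    refine Finset.sum_congr rfl fun i _ => ?_
    rw [Matrix.smul_mul, Finset.mul_sum]
    have key : ∀ m, vecMulVec (u i) (star (u i)) * (((Real.sqrt (r m) : ℝ) : ℂ) • vecMulVec (u m) (star (u m)))
        = if i = m then ((Real.sqrt (r m) : ℝ) : ℂ) • vecMulVec (u i) (star (u m)) else 0 := by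
      intro m
      rw [Matrix.mul_smul, myOuterMul, hu]
      split_ifs with h
      · simp [smul_smul]
      · simp
    simp only [key]
    rw [Finset.sum_ite_eq univ i]
    simp [smul_smul, ← Complex.ofReal_mul, Real.mul_self_sqrt (hrnn i)]
  have hS0psd : S0.PosSemidef := by
    refine Matrix.PosSemidef.of_dotProduct_mulVec_nonneg ?_ ?_
    · unfold Matrix.IsHermitian
      rw [hS0, conjTranspose_sum]
      refine Finset.sum_congr rfl fun i _ => ?_
      rw [conjTranspose_smul, myOuterCT, star_star]
      congr 1
      simp
    · intro x
      rw [hS0, mySumMulVec, myDotSum]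
      refine Finset.sum_nonneg fun i _ => ?_
      rw [Matrix.smul_mulVec, myOuterMulVec]
      have hsx : star x ⬝ᵥ u i = star (star (u i) ⬝ᵥ x) := by
        simp [dotProduct, Finset.sum_comm, mul_comm]
      have key : star x ⬝ᵥ (((Real.sqrt (r i) : ℝ) : ℂ) • ((star (u i) ⬝ᵥ x) • u i))
          = ((Real.sqrt (r i) : ℝ) : ℂ) * ((star (u i) ⬝ᵥ x) * (star x ⬝ᵥ u i)) := by
        simp only [dotProduct_smul, smul_eq_mul]
        try ring
      have hnn : (star (u i) ⬝ᵥ x) * star (star (u i) ⬝ᵥ x)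
          = ((Complex.normSq (star (u i) ⬝ᵥ x) : ℝ) : ℂ) := by
        rw [Complex.star_def, Complex.mul_conj]
      rw [key, hsx, hnn, ← Complex.ofReal_mul, Complex.zero_le_real]
      exact mul_nonneg (Real.sqrt_nonneg _) (Complex.normSq_nonneg _)
  have hsqrtσ : psdSqrt σ = S0 := by
    exact myPsdSqrt_eq σ S0 hσ hS0psd hS0sq
  have htrS : trSqrt σ = ∑ i, Real.sqrt (r i) := by
    unfold trSqrt
    rw [hsqrtσ, hS0, trace_sum]
    simp [trace_smul, htrO]
  -- the key inequality
  have hineq : ε / Real.sqrt (r k) < ∑ i, Real.sqrt (r i) := by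
    have hsk : 0 < Real.sqrt (r k) := Real.sqrt_pos.mpr hrkpos
    have h1 : ∀ i ∈ univ.filter (fun i => k ≤ i), r i / Real.sqrt (r k) ≤ Real.sqrt (r i) := by
      intro i hi
      rw [Finset.mem_filter] at hi
      rw [div_le_iff₀ hsk]
      calc r i = Real.sqrt (r i) * Real.sqrt (r i) := (Real.mul_self_sqrt (hrnn i)).symm
        _ ≤ Real.sqrt (r i) * Real.sqrt (r k) := by
            exact mul_le_mul_of_nonneg_left (Real.sqrt_le_sqrt (hmono hi.2)) (Real.sqrt_nonneg _)
    calc ε / Real.sqrt (r k) < (∑ i ∈ univ.filter (fun i => k ≤ i), r i) / Real.sqrt (r k) := by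
          exact div_lt_div_of_pos_right (hjmin k hklt) hsk
      _ = ∑ i ∈ univ.filter (fun i => k ≤ i), r i / Real.sqrt (r k) := Finset.sum_div _ _ _
      _ ≤ ∑ i ∈ univ.filter (fun i => k ≤ i), Real.sqrt (r i) := Finset.sum_le_sum h1
      _ ≤ ∑ i, Real.sqrt (r i) := by
          exact Finset.sum_le_sum_of_subset_of_nonneg (Finset.filter_subset _ _)
            (fun i _ _ => Real.sqrt_nonneg _)
  have part2 : ε / Real.sqrt (lamMinPos (P * σ * P)) < trSqrt σ := by
    rw [htrS]
    refine lt_of_le_of_lt ?_ hineq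
    apply div_le_div_of_nonneg_left hε.le (Real.sqrt_pos.mpr hrkpos) (Real.sqrt_le_sqrt hlam)
  -- logs
  refine ⟨by rw [part1]; exact hj, part2, ?_⟩
  set lam := lamMinPos (P * σ * P)
  have hslam : 0 < Real.sqrt lam := Real.sqrt_pos.mpr hlampos
  have hdivpos : 0 < ε / Real.sqrt lam := div_pos hε hslam
  have htpos : 0 < trSqrt σ := lt_trans hdivpos part2
  have hlog : Real.logb 2 (ε / Real.sqrt lam) < Real.logb 2 (trSqrt σ) :=
    Real.logb_lt_logb one_lt_two hdivpos part2
  have hlogdiv : Real.logb 2 (ε / Real.sqrt lam) = Real.logb 2 ε - Real.logb 2 lam / 2 := by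
    rw [Real.logb_div hε.ne' hslam.ne']
    congr 1
    rw [Real.logb, Real.logb, Real.log_sqrt hlampos.le]
    ring
  have hloginv : Real.logb 2 (1 / ε) = - Real.logb 2 ε := by
    rw [one_div, Real.logb_inv]
  rw [hloginv]
  rw [hlogdiv] at hlog
  linarith
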